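/- Let q be a real number with q > 0 and q ≠ 1, and let k ≥ 0 be an integer. Then for every real number x such that x ∉ {0, 1, …, k}, q^{k·x} / [x]_{k+1} = (1/[k]!) · Σ_{i=0}^{k} (−1)^{k−i} · qbinom(k,i) · q^{(k²+k)/2 + (i²−i)/2} · (1/[x−i]). -/

import Mathlib

open Finset

/-- The q-bracket: `[x] = (q^x - 1)/(q - 1)`. -/
noncomputable def qb (q x : ℝ) : ℝ := (q ^ x - 1) / (q - 1)

/-- The q-falling factorial `[x]_m = [x]·[x-1]⋯[x-m+1]`. -/
noncomputable def qff (q x : ℝ) (m : ℕ) : ℝ := ∏ j ∈ range m, qb q (x - j)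

/-- The q-factorial `[m]! = [m]_m`. -/
noncomputable def qfact (q : ℝ) (m : ℕ) : ℝ := qff q (m : ℝ) m

/-- The q-binomial coefficient `qbinom(k, i) = [k]! / ([i]!·[k-i]!)`. -/
noncomputable def qbinom (q : ℝ) (k i : ℕ) : ℝ := qfact q k / (qfact q i * qfact q (k - i))

lemma qsub1 {q : ℝ} (hq1 : q ≠ 1) : q - 1 ≠ 0 := sub_ne_zero.2 hq1

lemma rpow_ne_one' {q : ℝ} (hq : 0 < q) (hq1 : q ≠ 1) {x : ℝ} (hx : x ≠ 0) : q ^ x ≠ 1 := by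
  rw [Real.rpow_def_of_pos hq]
  intro h
  rw [Real.exp_eq_one_iff] at h
  rcases mul_eq_zero.1 h with h | h
  · exact (Real.log_ne_zero_of_pos_of_ne_one hq hq1) h
  · exact hx h

lemma qb_ne_zero {q : ℝ} (hq : 0 < q) (hq1 : q ≠ 1) {x : ℝ} (hx : x ≠ 0) : qb q x ≠ 0 :=
  div_ne_zero (sub_ne_zero.2 (rpow_ne_one' hq hq1 hx)) (qsub1 hq1)

lemma qb_add {q : ℝ} (hq : 0 < q) (hq1 : q ≠ 1) (a b : ℕ) :
    qb q ((a : ℝ) + b) = qb q a + q ^ a * qb q b := by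
  unfold qb
  rw [Real.rpow_add hq, Real.rpow_natCast, Real.rpow_natCast]
  field_simp [qsub1 hq1]
  ring

lemma qff_succ (q x : ℝ) (m : ℕ) : qff q x (m + 1) = qff q x m * qb q (x - m) :=
  prod_range_succ _ _

lemma qff_succ' (q x : ℝ) (m : ℕ) : qff q x (m + 1) = qb q x * qff q (x - 1) m := by
  unfold qff
  rw [prod_range_succ']
  simp only [Nat.cast_zero, sub_zero, Nat.cast_add, Nat.cast_one]
  rw [mul_comm]
  congr 1
  refine prod_congr rfl fun j _ => ?_
  push_cast; ring_nf

lemma qfact_zero (q : ℝ) : qfact q 0 = 1 := by simp [qfact, qff]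

lemma qfact_succ (q : ℝ) (m : ℕ) : qfact q (m + 1) = qb q ((m : ℝ) + 1) * qfact q m := by
  unfold qfact
  push_cast
  rw [qff_succ']
  congr 1
  simp

lemma qfact_ne_zero {q : ℝ} (hq : 0 < q) (hq1 : q ≠ 1) (m : ℕ) : qfact q m ≠ 0 := by
  induction m with
  | zero => simp [qfact_zero]
  | succ n ih =>
      rw [qfact_succ]
      exact mul_ne_zero (qb_ne_zero hq hq1 (by positivity)) ih

lemma qbinom_self {q : ℝ} (hq : 0 < q) (hq1 : q ≠ 1) (m : ℕ) : qbinom q m m = 1 := by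
  unfold qbinom
  rw [Nat.sub_self, qfact_zero, mul_one, div_self (qfact_ne_zero hq hq1 m)]

lemma qbinom_zero {q : ℝ} (hq : 0 < q) (hq1 : q ≠ 1) (m : ℕ) : qbinom q m 0 = 1 := by
  unfold qbinom
  rw [qfact_zero, Nat.sub_zero, one_mul, div_self (qfact_ne_zero hq hq1 m)]

lemma qbinom_pascal {q : ℝ} (hq : 0 < q) (hq1 : q ≠ 1) (k i : ℕ) (h : i < k) :
    qbinom q (k + 1) (i + 1) = q ^ (k - i) * qbinom q k i + qbinom q k (i + 1) := by
  obtain ⟨d, rfl⟩ : ∃ d, k = i + 1 + d := ⟨k - i - 1, by omega⟩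
  have e0 : i + 1 + d - i = d + 1 := by omega
  have e1 : i + 1 + d + 1 - (i + 1) = d + 1 := by omega
  have e2 : i + 1 + d - (i + 1) = d := by omega
  unfold qbinom
  rw [e0, e1, e2]
  have hk : qfact q (i + 1 + d + 1) = qb q ((i : ℝ) + (d : ℝ) + 2) * qfact q (i + 1 + d) := by
    rw [qfact_succ]; push_cast; ring_nf
  have hi : qfact q (i + 1) = qb q ((i : ℝ) + 1) * qfact q i := qfact_succ q i
  have hd : qfact q (d + 1) = qb q ((d : ℝ) + 1) * qfact q d := qfact_succ q d
  have hbr : qb q ((i : ℝ) + (d : ℝ) + 2)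
      = qb q ((d : ℝ) + 1) + q ^ (d + 1) * qb q ((i : ℝ) + 1) := by
    have h2 := qb_add hq hq1 (d + 1) (i + 1)
    push_cast at h2
    rw [show (d : ℝ) + 1 + ((i : ℝ) + 1) = (i : ℝ) + (d : ℝ) + 2 by ring] at h2
    exact h2
  rw [hk, hi, hd, hbr]
  have n1 : qb q ((i : ℝ) + 1) ≠ 0 := qb_ne_zero hq hq1 (by positivity)
  have n2 : qb q ((d : ℝ) + 1) ≠ 0 := qb_ne_zero hq hq1 (by positivity)
  have n3 := qfact_ne_zero hq hq1 i
  have n4 := qfact_ne_zero hq hq1 d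
  have n5 := qfact_ne_zero hq hq1 (i + 1 + d)
  field_simp
  ring

lemma exp_E (k : ℕ) : ((k + 1) ^ 2 + (k + 1)) / 2 = (k ^ 2 + k) / 2 + (k + 1) := by
  obtain ⟨m, hm⟩ := Nat.even_mul_succ_self k
  have h1 : k ^ 2 + k = m + m := by rw [← hm]; ring
  have h2 : (k + 1) ^ 2 + (k + 1) = k ^ 2 + k + 2 * (k + 1) := by ring
  omega

lemma exp_f (i : ℕ) : ((i + 1) ^ 2 - (i + 1)) / 2 = (i ^ 2 - i) / 2 + i := by
  obtain ⟨m, hm⟩ := Nat.even_mul_succ_self i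
  have h1 : i * (i + 1) = i ^ 2 + i := by ring
  have h2 : (i + 1) ^ 2 = i ^ 2 + 2 * i + 1 := by ring
  have h3 : i ≤ i ^ 2 := Nat.le_self_pow two_ne_zero i
  omega

lemma sum_step {q : ℝ} (hq : 0 < q) (hq1 : q ≠ 1) (k : ℕ) (x : ℝ) :
    ∑ i ∈ range (k + 1 + 1),
        (-1 : ℝ) ^ (k + 1 - i) * qbinom q (k + 1) i *
          q ^ (((k + 1) ^ 2 + (k + 1)) / 2 + (i ^ 2 - i) / 2) * (1 / qb q (x - i))
      = q ^ (2 * k + 1) *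
          ∑ i ∈ range (k + 1),
            (-1 : ℝ) ^ (k - i) * qbinom q k i *
              q ^ ((k ^ 2 + k) / 2 + (i ^ 2 - i) / 2) * (1 / qb q (x - 1 - i))
        - q ^ (k + 1) *
          ∑ i ∈ range (k + 1),
            (-1 : ℝ) ^ (k - i) * qbinom q k i *
              q ^ ((k ^ 2 + k) / 2 + (i ^ 2 - i) / 2) * (1 / qb q (x - i)) := by
  rw [mul_sum, mul_sum, sum_range_succ', sum_range_succ,
      sum_range_succ (fun i => q ^ (2 * k + 1) * _) k, sum_range_succ']
  push_cast
  have mid : ∀ i ∈ range k,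
      (-1 : ℝ) ^ (k - i) * qbinom q (k + 1) (i + 1) *
          q ^ (((k + 1) ^ 2 + (k + 1)) / 2 + ((i + 1) ^ 2 - (i + 1)) / 2) *
          (1 / qb q (x - ((i : ℝ) + 1)))
        = q ^ (2 * k + 1) *
            ((-1 : ℝ) ^ (k - i) * qbinom q k i * q ^ ((k ^ 2 + k) / 2 + (i ^ 2 - i) / 2) *
              (1 / qb q (x - 1 - i)))
          - q ^ (k + 1) *
            ((-1 : ℝ) ^ (k - (i + 1)) * qbinom q k (i + 1) *
              q ^ ((k ^ 2 + k) / 2 + ((i + 1) ^ 2 - (i + 1)) / 2) *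
              (1 / qb q (x - ((i : ℝ) + 1)))) := by
    intro i hi
    rw [mem_range] at hi
    have hden : x - 1 - (i : ℝ) = x - ((i : ℝ) + 1) := by ring
    rw [hden]
    have hE := exp_E k
    have hf := exp_f i
    have hP := qbinom_pascal hq hq1 k i hi
    obtain ⟨d, rfl⟩ : ∃ d, k = i + 1 + d := ⟨k - i - 1, by omega⟩
    rw [show i + 1 + d - i = d + 1 by omega,
        show i + 1 + d - (i + 1) = d by omega] at *
    rw [hP, hE, hf]
    ring
  have edgeK : (-1 : ℝ) ^ (k - k) * qbinom q (k + 1) (k + 1) *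
        q ^ (((k + 1) ^ 2 + (k + 1)) / 2 + ((k + 1) ^ 2 - (k + 1)) / 2) *
        (1 / qb q (x - ((k : ℝ) + 1)))
      = q ^ (2 * k + 1) *
          ((-1 : ℝ) ^ (k - k) * qbinom q k k * q ^ ((k ^ 2 + k) / 2 + (k ^ 2 - k) / 2) *
            (1 / qb q (x - 1 - k))) := by
    have hden : x - 1 - (k : ℝ) = x - ((k : ℝ) + 1) := by ring
    rw [hden, qbinom_self hq hq1, qbinom_self hq hq1, exp_E, exp_f]
    ring
  have edge0 : (-1 : ℝ) ^ (k + 1) * qbinom q (k + 1) 0 *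
        q ^ (((k + 1) ^ 2 + (k + 1)) / 2 + 0) * (1 / qb q (x - 0))
      = -(q ^ (k + 1) *
          ((-1 : ℝ) ^ (k - 0) * qbinom q k 0 * q ^ ((k ^ 2 + k) / 2 + 0) *
            (1 / qb q (x - 0)))) := by
    rw [qbinom_zero hq hq1, qbinom_zero hq hq1, exp_E, Nat.sub_zero]
    ring
  rw [sum_congr rfl mid, sum_sub_distrib]
  linear_combination edgeK + edge0

lemma key_id {q : ℝ} (hq : 0 < q) (hq1 : q ≠ 1) (k : ℕ) (x : ℝ) :
    qb q ((k : ℝ) + 1) * q ^ (((k : ℝ) + 1) * x)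
      = q ^ (2 * k + 1) * q ^ ((k : ℝ) * (x - 1)) * qb q x
        - q ^ (k + 1) * q ^ ((k : ℝ) * x) * qb q (x - ((k : ℝ) + 1)) := by
  unfold qb
  rw [show ((k : ℝ) + 1) * x = (k : ℝ) * x + x by ring, Real.rpow_add hq,
      show (k : ℝ) * (x - 1) = (k : ℝ) * x - (k : ℝ) by ring, Real.rpow_sub hq,
      Real.rpow_sub hq x, show ((k : ℝ) + 1) = ((k + 1 : ℕ) : ℝ) by push_cast; ring,
      Real.rpow_natCast, Real.rpow_natCast]
  have h1 : q ^ (k : ℕ) ≠ 0 := by positivity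
  have h2 : q ^ (k + 1) ≠ 0 := by positivity
  field_simp [qsub1 hq1]
  rw [show x * ((k : ℝ) + 1) = (k : ℝ) * x + x by ring, Real.rpow_add hq ((k : ℝ) * x) x, Real.rpow_one]
  ring

theorem q_partial_fraction_decomposition (q : ℝ) (hq : 0 < q) (hq1 : q ≠ 1)
    (k : ℕ) (x : ℝ) (hx : ∀ i : ℕ, i ≤ k → x ≠ (i : ℝ)) :
    q ^ ((k : ℝ) * x) / qff q x (k + 1)
      = (1 / qfact q k) *
          ∑ i ∈ range (k + 1),
            (-1 : ℝ) ^ (k - i) * qbinom q k i *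
              q ^ ((k ^ 2 + k) / 2 + (i ^ 2 - i) / 2) * (1 / qb q (x - i)) := by
  induction k generalizing x with
  | zero =>
      have h0 : x ≠ 0 := by simpa using hx 0 le_rfl
      simp [qff_succ, qff, qfact_zero, qbinom_self hq hq1]
  | succ k ih =>
      have hx' : ∀ i : ℕ, i ≤ k → x ≠ (i : ℝ) := fun i hi => hx i (by omega)
      have hx1 : ∀ i : ℕ, i ≤ k → x - 1 ≠ (i : ℝ) := by
        intro i hi h
        have := hx (i + 1) (by omega)
        apply this
        push_cast
        linarith
      have ihx := ih x hx'
      have ihx1 := ih (x - 1) hx1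
      -- nonvanishing
      have hF := qfact_ne_zero hq hq1 k
      have hbk1 : qb q ((k : ℝ) + 1) ≠ 0 := qb_ne_zero hq hq1 (by positivity)
      have hbx : qb q x ≠ 0 := qb_ne_zero hq hq1 (by simpa using hx 0 (by omega))
      have hbxk : qb q (x - ((k : ℝ) + 1)) ≠ 0 := by
        refine qb_ne_zero hq hq1 (sub_ne_zero.2 ?_)
        have := hx (k + 1) le_rfl
        push_cast at this
        exact this
      have hG : qff q (x - 1) (k + 1) ≠ 0 := by
        rw [qff]
        refine prod_ne_zero_iff.2 fun j hj => ?_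
        rw [mem_range] at hj
        refine qb_ne_zero hq hq1 ?_
        have := hx (j + 1) (by omega)
        push_cast at this
        intro h; apply this; linarith
      have hH : qff q x (k + 1) ≠ 0 := by
        rw [qff]
        refine prod_ne_zero_iff.2 fun j hj => ?_
        rw [mem_range] at hj
        exact qb_ne_zero hq hq1 (sub_ne_zero.2 (hx j (by omega)))
      -- split of the big product
      have hsplit1 : qff q x (k + 1 + 1) = qb q x * qff q (x - 1) (k + 1) := qff_succ' q x (k + 1)
      have hsplit2 : qff q x (k + 1 + 1) = qff q x (k + 1) * qb q (x - ((k : ℝ) + 1)) := by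
        rw [qff_succ]; push_cast; ring_nf
      have hGH : qb q x * qff q (x - 1) (k + 1)
          = qff q x (k + 1) * qb q (x - ((k : ℝ) + 1)) := by rw [← hsplit1, hsplit2]
      have key := key_id hq hq1 k x
      -- rewrite the sum
      rw [sum_step hq hq1 k x]
      -- express S-sums via ih
      have hS1 : ∑ i ∈ range (k + 1),
            (-1 : ℝ) ^ (k - i) * qbinom q k i *
              q ^ ((k ^ 2 + k) / 2 + (i ^ 2 - i) / 2) * (1 / qb q (x - 1 - i))
          = qfact q k * (q ^ ((k : ℝ) * (x - 1)) / qff q (x - 1) (k + 1)) := by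
        rw [ihx1]; field_simp
      have hS2 : ∑ i ∈ range (k + 1),
            (-1 : ℝ) ^ (k - i) * qbinom q k i *
              q ^ ((k ^ 2 + k) / 2 + (i ^ 2 - i) / 2) * (1 / qb q (x - i))
          = qfact q k * (q ^ ((k : ℝ) * x) / qff q x (k + 1)) := by
        rw [ihx]; field_simp
      rw [hS1, hS2, qfact_succ, hsplit1]
      rw [show ((k + 1 : ℕ) : ℝ) = (k : ℝ) + 1 by push_cast; ring]
      set A3 := q ^ (((k : ℝ) + 1) * x) with hA3
      set A1 := q ^ ((k : ℝ) * (x - 1)) with hA1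
      set A2 := q ^ ((k : ℝ) * x) with hA2
      set B := qb q ((k : ℝ) + 1) with hB
      set Bx := qb q x with hBx
      set Bk := qb q (x - ((k : ℝ) + 1)) with hBk
      set G := qff q (x - 1) (k + 1) with hGd
      set H := qff q x (k + 1) with hHd
      set F := qfact q k with hFd
      have expand : 1 / (B * F) * (q ^ (2 * k + 1) * (F * (A1 / G)) - q ^ (k + 1) * (F * (A2 / H)))
          = (q ^ (2 * k + 1) * A1 * H - q ^ (k + 1) * A2 * G) / (B * (G * H)) := by
        field_simp
      rw [expand, div_eq_div_iff (mul_ne_zero hbx hG) (mul_ne_zero hbk1 (mul_ne_zero hG hH))]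
      linear_combination (G * H) * key + (q ^ (k + 1) * A2 * G) * hGH
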